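/- If p : ℝ → ℝ is a polynomial function of degree at most n (i.e., Δ_{y₁}⋯Δ_{y_{n+1}} p(x) = 0 for all x, y₁,…,y_{n+1} ∈ ℝ) and p is bounded on a set of positive Lebesgue measure, then p is an actual polynomial: there exist a₀,…,a_n ∈ ℝ with p(x) = a_n x^n + ⋯ + a₁x + a₀ for all x. -/

import Mathlib

open MeasureTheory

open Finset Filter
open scoped ENNReal

def Δ (h : ℝ) (f : ℝ → ℝ) : ℝ → ℝ := fun x => f (x + h) - f x

lemma foldr_zero (l : List ℝ) (f : ℝ → ℝ) (hf : ∀ x, f x = 0) :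
    ∀ x, (l.foldr Δ f) x = 0 := by
  induction l with
  | nil => exact hf
  | cons h t ih => intro x; simp [Δ, ih]

noncomputable def shiftC {m : ℕ} (a : Fin (m+1) → ℝ) (k : ℝ) : Fin (m+1) → ℝ :=
  fun j => ∑ i : Fin (m+1),
    if (j:ℕ) ≤ (i:ℕ) then a i * (Nat.choose i j) * k ^ ((i:ℕ) - (j:ℕ)) else 0

lemma shiftC_eval {m : ℕ} (a : Fin (m+1) → ℝ) (k x : ℝ) :
    ∑ j : Fin (m+1), shiftC a k j * x ^ (j:ℕ)
      = ∑ i : Fin (m+1), a i * (x + k) ^ (i:ℕ) := by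
  have h1 : ∀ i : Fin (m+1), (x + k) ^ (i:ℕ)
      = ∑ j : Fin (m+1), if (j:ℕ) ≤ (i:ℕ) then
          x ^ (j:ℕ) * k ^ ((i:ℕ) - (j:ℕ)) * (Nat.choose i j) else 0 := by
    intro i
    rw [add_pow, Fin.sum_univ_eq_sum_range
      (fun j => if j ≤ (i:ℕ) then x ^ j * k ^ ((i:ℕ) - j) * (Nat.choose i j) else 0)]
    rw [← Finset.sum_subset (Finset.range_subset_range.2 (by omega : (i:ℕ)+1 ≤ m+1))
      (fun j hj hj2 => by
        rw [if_neg]; simp only [Finset.mem_range] at hj hj2; omega)]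
    refine Finset.sum_congr rfl (fun j hj => ?_)
    rw [if_pos (by simp only [Finset.mem_range] at hj; omega)]
  simp only [shiftC, Finset.sum_mul]
  rw [Finset.sum_comm]
  refine Finset.sum_congr rfl (fun i _ => ?_)
  rw [h1 i, Finset.mul_sum]
  refine Finset.sum_congr rfl (fun j _ => ?_)
  split_ifs with h
  · ring
  · ring

lemma shiftC_last {m : ℕ} (a : Fin (m+1) → ℝ) (k : ℝ) :
    shiftC a k (Fin.last m) = a (Fin.last m) := by
  rw [shiftC, Finset.sum_eq_single (Fin.last m)]
  · simp
  · intro i _ hi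
    rw [if_neg]
    simp only [Fin.val_last]
    have : (i:ℕ) < m := by
      rcases lt_or_eq_of_le (Nat.lt_succ_iff.1 i.isLt) with h | h
      · exact h
      · exact absurd (Fin.ext h) hi
    omega
  · simp

lemma poly_ext {m : ℕ} (a b : Fin m → ℝ)
    (h : ∀ x : ℝ, ∑ i : Fin m, a i * x ^ (i:ℕ) = ∑ i : Fin m, b i * x ^ (i:ℕ)) :
    a = b := by
  have key : ∀ (c : Fin m → ℝ) (x : ℝ),
      (∑ i : Fin m, Polynomial.C (c i) * Polynomial.X ^ (i:ℕ)).eval x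
        = ∑ i : Fin m, c i * x ^ (i:ℕ) := by
    intro c x
    rw [Polynomial.eval_finset_sum]
    simp
  have hp : (∑ i : Fin m, Polynomial.C (a i) * Polynomial.X ^ (i:ℕ))
      = ∑ i : Fin m, Polynomial.C (b i) * Polynomial.X ^ (i:ℕ) := by
    apply Polynomial.funext
    intro x
    rw [key, key]; exact h x
  funext i
  have := congrArg (fun p => Polynomial.coeff p (i:ℕ)) hp
  simpa [Polynomial.finset_sum_coeff, Polynomial.coeff_C_mul, Polynomial.coeff_X_pow,
    Finset.sum_ite_eq' , Fin.val_injective.eq_iff] using this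

lemma sum_last_zero {m : ℕ} (c : Fin (m+1) → ℝ) (hc : c (Fin.last m) = 0) (x : ℝ) :
    ∑ i : Fin (m+1), c i * x ^ (i:ℕ) = ∑ i : Fin m, c i.castSucc * x ^ (i:ℕ) := by
  rw [Fin.sum_univ_castSucc]
  simp [hc]

lemma delta_poly {m : ℕ} (a : Fin (m+1) → ℝ) (h : ℝ) :
    ∃ b : Fin m → ℝ, ∀ x : ℝ,
      Δ h (fun x => ∑ i : Fin (m+1), a i * x ^ (i:ℕ)) x = ∑ i : Fin m, b i * x ^ (i:ℕ) := by
  refine ⟨fun i => shiftC a h i.castSucc - a i.castSucc, fun x => ?_⟩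
  have : Δ h (fun x => ∑ i : Fin (m+1), a i * x ^ (i:ℕ)) x
      = ∑ i : Fin (m+1), (shiftC a h i - a i) * x ^ (i:ℕ) := by
    simp only [Δ, sub_mul, Finset.sum_sub_distrib]
    rw [shiftC_eval]
  rw [this, sum_last_zero (fun i => shiftC a h i - a i) (by simp [shiftC_last])]

lemma kill : ∀ (m : ℕ) (f : ℝ → ℝ) (a : Fin m → ℝ),
    (∀ x, f x = ∑ i : Fin m, a i * x ^ (i:ℕ)) →
    ∀ l : List ℝ, m ≤ l.length → ∀ x, (l.foldr Δ f) x = 0 := by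
  intro m
  induction m with
  | zero =>
    intro f a hf l _ x
    exact foldr_zero l f (by simpa using hf) x
  | succ m ih =>
    intro f a hf l hl x
    rcases List.eq_nil_or_concat l with rfl | ⟨l', h, rfl⟩
    · simp at hl
    · rw [List.concat_eq_append, List.foldr_append]
      obtain ⟨b, hb⟩ := delta_poly a h
      have hfb : ∀ x, Δ h f x = ∑ i : Fin m, b i * x ^ (i:ℕ) := by
        intro x
        rw [show Δ h f x = Δ h (fun x => ∑ i : Fin (m+1), a i * x ^ (i:ℕ)) x by
          simp [Δ, hf]]
        exact hb x
      exact ih (Δ h f) b hfb l' (by simp at hl ⊢; omega) x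

lemma coeff_bound (m : ℕ) : ∃ K : ℝ, ∀ (a : Fin (m+1) → ℝ) (g : ℝ → ℝ),
    (∀ x : ℝ, g x = ∑ i : Fin (m+1), a i * x ^ (i:ℕ)) →
    ∀ M : ℝ, (∀ j : Fin (m+1), |g (j:ℕ)| ≤ M) → ∀ i, |a i| ≤ K * M := by
  classical
  set V : Matrix (Fin (m+1)) (Fin (m+1)) ℝ :=
    Matrix.vandermonde (fun k : Fin (m+1) => (k : ℝ)) with hV
  have hdet : IsUnit V.det := by
    rw [isUnit_iff_ne_zero, hV, Matrix.det_vandermonde_ne_zero_iff]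
    intro i j hij
    exact Fin.ext (Nat.cast_injective (R := ℝ) (by simpa using hij))
  refine ⟨∑ i, ∑ j, |V⁻¹ i j|, fun a g hg M hM i => ?_⟩
  have hmul : V.mulVec a = fun k : Fin (m+1) => g (((k:ℕ)):ℝ) := by
    funext k
    rw [hg]
    simp [Matrix.mulVec, dotProduct, hV, Matrix.vandermonde, mul_comm]
  have ha : a = V⁻¹.mulVec (fun k : Fin (m+1) => g (((k:ℕ)):ℝ)) := by
    rw [← hmul, Matrix.mulVec_mulVec, Matrix.nonsing_inv_mul V hdet, Matrix.one_mulVec]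
  have hM0 : 0 ≤ M := le_trans (abs_nonneg _) (hM 0)
  have h2 : |a i| ≤ ∑ j, |V⁻¹ i j| * M := by
    conv_lhs => rw [ha]
    simp only [Matrix.mulVec, dotProduct]
    refine le_trans (Finset.abs_sum_le_sum_abs _ _) ?_
    refine Finset.sum_le_sum (fun j _ => ?_)
    rw [abs_mul]
    exact mul_le_mul_of_nonneg_left (hM j) (abs_nonneg _)
  refine le_trans h2 ?_
  rw [← Finset.sum_mul]
  refine mul_le_mul_of_nonneg_right ?_ hM0
  exact Finset.single_le_sum (f := fun i => ∑ j, |V⁻¹ i j|)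
    (fun i _ => Finset.sum_nonneg (fun j _ => abs_nonneg _)) (Finset.mem_univ i)

lemma additive_linear (φ : ℝ → ℝ) (hadd : ∀ x y, φ (x+y) = φ x + φ y)
    (B : ℝ) (hB : ∀ h : ℝ, |h| ≤ 1 → |φ h| ≤ B) : ∀ x, φ x = φ 1 * x := by
  set ψ : ℝ → ℝ := fun x => φ x - φ 1 * x with hψ
  have ψadd : ∀ x y, ψ (x+y) = ψ x + ψ y := by
    intro x y; simp only [hψ, hadd]; ring
  have ψ0 : ψ 0 = 0 := by
    have := ψadd 0 0; simp only [add_zero] at this; linarith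
  have ψnat : ∀ (n : ℕ) (x : ℝ), ψ ((n:ℝ) * x) = n * ψ x := by
    intro n
    induction n with
    | zero => simp [ψ0]
    | succ k ihk =>
      intro x
      have h1 : ((k:ℝ)+1) * x = (k:ℝ) * x + x := by ring
      push_cast
      rw [h1, ψadd, ihk]
      ring
  have ψint : ∀ (n : ℤ), ψ (n:ℝ) = 0 := by
    have ψneg : ∀ x, ψ (-x) = -ψ x := by
      intro x
      have := ψadd x (-x); rw [add_neg_cancel, ψ0] at this; linarith
    have ψ1 : ψ 1 = 0 := by simp [hψ]
    intro n
    rcases n with n | n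
    · simpa [ψ1] using ψnat n 1
    · simp only [Int.cast_negSucc]
      rw [ψneg]
      have := ψnat (n+1) 1
      simp [ψ1] at this
      push_cast
      simp [this]
  have hbd : ∀ x, |ψ x| ≤ B + |φ 1| := by
    have h01 : ∀ x : ℝ, 0 ≤ x → x < 1 → |ψ x| ≤ B + |φ 1| := by
      intro x h0 h1
      have : |φ x| ≤ B := hB x (by rw [abs_of_nonneg h0]; linarith)
      calc |ψ x| ≤ |φ x| + |φ 1 * x| := abs_sub _ _
        _ ≤ B + |φ 1| := by
            rw [abs_mul]
            have : |φ 1| * |x| ≤ |φ 1| * 1 :=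
              mul_le_mul_of_nonneg_left (by rw [abs_of_nonneg h0]; linarith) (abs_nonneg _)
            linarith
    intro x
    have h2 := ψadd (Int.fract x) ((⌊x⌋:ℤ) : ℝ)
    rw [Int.fract_add_floor, ψint ⌊x⌋] at h2
    rw [show ψ x = ψ (Int.fract x) by linarith]
    exact h01 _ (Int.fract_nonneg x) (Int.fract_lt_one x)
  intro x
  have hz : ψ x = 0 := by
    by_contra hne
    have hpos : 0 < |ψ x| := abs_pos.2 hne
    obtain ⟨n, hn⟩ := exists_nat_gt ((B + |φ 1|) / |ψ x|)
    have hn' : B + |φ 1| < n * |ψ x| := by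
      rw [div_lt_iff₀ hpos] at hn; linarith
    have : |ψ ((n:ℝ) * x)| = n * |ψ x| := by
      rw [ψnat, abs_mul, abs_of_nonneg (by positivity : (0:ℝ) ≤ (n:ℝ))]
    have := hbd ((n:ℝ) * x)
    rw [‹|ψ ((n:ℝ) * x)| = n * |ψ x|›] at this
    linarith
  simp only [hψ] at hz
  linarith

lemma foldr_const (m : ℕ) (f : ℝ → ℝ) (y : ℝ) : ∀ x : ℝ,
    ((List.replicate m y).foldr Δ f) x
      = ∑ k ∈ Finset.range (m+1), (-1:ℝ)^(m+k) * (Nat.choose m k) * f (x + k*y) := by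
  induction m with
  | zero => intro x; simp
  | succ m ih =>
    intro x
    rw [List.replicate_succ, List.foldr_cons]
    show ((List.replicate m y).foldr Δ f) (x + y) - ((List.replicate m y).foldr Δ f) x = _
    rw [ih, ih]
    set S1 := ∑ k ∈ Finset.range (m+1), (-1:ℝ)^(m+k) * (Nat.choose m k) * f (x + (k+1)*y) with hS1
    set S0 := ∑ k ∈ Finset.range (m+1), (-1:ℝ)^(m+k) * (Nat.choose m k) * f (x + k*y) with hS0def
    set T := ∑ k ∈ Finset.range (m+1), (-1:ℝ)^(m+k) * (Nat.choose m (k+1)) * f (x + (k+1)*y) with hT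
    have e1 : ∑ k ∈ Finset.range (m+1), (-1:ℝ)^(m+k) * (Nat.choose m k) * f (x + y + k*y) = S1 := by
      refine Finset.sum_congr rfl (fun k _ => ?_)
      ring_nf
    rw [e1]
    have hR : ∑ k ∈ Finset.range (m+1+1), (-1:ℝ)^(m+1+k) * (Nat.choose (m+1) k) * f (x + k*y)
        = S1 + T + (-1:ℝ)^(m+1) * f x := by
      rw [Finset.sum_range_succ'
        (fun k => (-1:ℝ)^(m+1+k) * (Nat.choose (m+1) k) * f (x + k*y)) (m+1)]
      push_cast
      have e2 : ∀ k ∈ Finset.range (m+1),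
          (-1:ℝ)^(m+1+(k+1)) * (Nat.choose (m+1) (k+1)) * f (x + (k+1)*y)
            = (-1:ℝ)^(m+k) * (Nat.choose m k) * f (x + (k+1)*y)
              + (-1:ℝ)^(m+k) * (Nat.choose m (k+1)) * f (x + (k+1)*y) := by
        intro k _
        rw [Nat.choose_succ_succ]
        push_cast
        have hs : (-1:ℝ)^(m+1+(k+1)) = (-1:ℝ)^(m+k) := by
          rw [show m+1+(k+1) = (m+k)+2 by ring, pow_add]
          norm_num
        rw [hs]; ring
      rw [Finset.sum_congr rfl e2, Finset.sum_add_distrib]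
      push_cast
      norm_num
      rfl
    rw [hR]
    have hT2 : T = ∑ k ∈ Finset.range m, (-1:ℝ)^(m+k) * (Nat.choose m (k+1)) * f (x + (k+1)*y) := by
      rw [hT, Finset.sum_range_succ, Nat.choose_succ_self]
      norm_num
    have hS02 : S0 = -T + (-1:ℝ)^m * f x := by
      rw [hS0def, Finset.sum_range_succ'
        (fun k => (-1:ℝ)^(m+k) * (Nat.choose m k) * f (x + k*y)) m]
      push_cast
      rw [hT2, ← Finset.sum_neg_distrib]
      have : ∀ k ∈ Finset.range m,
          (-1:ℝ)^(m+(k+1)) * (Nat.choose m (k+1)) * f (x + (k+1)*y)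
            = -((-1:ℝ)^(m+k) * (Nat.choose m (k+1)) * f (x + (k+1)*y)) := by
        intro k _
        rw [show m+(k+1) = (m+k)+1 by ring, pow_succ]
        ring
      rw [Finset.sum_congr rfl this]
      norm_num
    rw [hS02, pow_succ]
    ring

lemma solveTop (n : ℕ) (f : ℝ → ℝ)
    (hp : ∀ (y : Fin (n+1) → ℝ) (x : ℝ), ((List.ofFn y).foldr Δ f) x = 0)
    (x y : ℝ) :
    |f (x + ((n:ℝ)+1)*y)|
      ≤ ∑ k ∈ Finset.range (n+1), ((n+1).choose k : ℝ) * |f (x + k*y)| := by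
  have h1 := hp (fun _ => y) x
  rw [List.ofFn_const, foldr_const] at h1
  rw [Finset.sum_range_succ] at h1
  have h2 : (-1:ℝ)^(n+1+(n+1)) = 1 := by
    rw [show n+1+(n+1) = 2*(n+1) by ring, pow_mul]
    norm_num
  rw [h2, Nat.choose_self] at h1
  have h3 : f (x + ((n:ℝ)+1)*y)
      = - ∑ k ∈ Finset.range (n+1), (-1:ℝ)^(n+1+k) * ((n+1).choose k : ℝ) * f (x + k*y) := by
    push_cast at h1 ⊢
    linarith
  rw [h3, abs_neg]
  refine le_trans (Finset.abs_sum_le_sum_abs _ _) (Finset.sum_le_sum fun k _ => ?_)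
  rw [abs_mul, abs_mul, abs_pow, abs_neg, abs_one, one_pow, one_mul, Nat.abs_cast]

lemma choose_sum_le (n : ℕ) :
    (∑ k ∈ Finset.range (n+1), ((n+1).choose k : ℝ)) ≤ 2^(n+1) := by
  have h1 : (∑ k ∈ Finset.range (n+1), (n+1).choose k)
      ≤ ∑ k ∈ Finset.range (n+2), (n+1).choose k :=
    Finset.sum_le_sum_of_subset (Finset.range_subset_range.2 (by omega))
  have h2 := Nat.sum_range_choose (n+1)
  calc (∑ k ∈ Finset.range (n+1), ((n+1).choose k : ℝ))
      = ((∑ k ∈ Finset.range (n+1), (n+1).choose k : ℕ) : ℝ) := by push_cast; ring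
    _ ≤ ((2^(n+1) : ℕ) : ℝ) := by exact_mod_cast le_trans h1 (le_of_eq h2)
    _ = 2^(n+1) := by push_cast; ring

lemma boundAll (n : ℕ) (f : ℝ → ℝ)
    (hp : ∀ (y : Fin (n+1) → ℝ) (x : ℝ), ((List.ofFn y).foldr Δ f) x = 0)
    (u v C0 : ℝ) (huv : u < v) (hb : ∀ x, u < x → x < v → |f x| ≤ C0) :
    ∀ R : ℝ, ∃ C, ∀ x, |x| ≤ R → |f x| ≤ C := by
  obtain ⟨δ, γ, hδpos, hγpos, hγδ, hδvu⟩ :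
      ∃ δ γ : ℝ, 0 < δ ∧ 0 < γ ∧ ((n:ℝ)+1)*γ ≤ δ/2 ∧ ((n:ℝ)+1)*δ ≤ (v-u)/4 := by
    have hvu : (0:ℝ) < v - u := by linarith
    have hn1 : (0:ℝ) < (n:ℝ)+1 := by positivity
    refine ⟨(v-u)/(4*((n:ℝ)+1)), (v-u)/(8*((n:ℝ)+1)^2), by positivity, by positivity, ?_, ?_⟩
    · apply le_of_eq
      have hne : ((n:ℝ)+1) ≠ 0 := by positivity
      field_simp
      ring
    · apply le_of_eq
      have hne : ((n:ℝ)+1) ≠ 0 := by positivity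
      field_simp
  obtain ⟨C0', hC0C, hC00⟩ : ∃ C0', C0 ≤ C0' ∧ 0 ≤ C0' :=
    ⟨max C0 0, le_max_left _ _, le_max_right _ _⟩
  have hQ1 : (1:ℝ) ≤ 2^(n+1) := one_le_pow₀ (by norm_num)
  have hQ0 : (0:ℝ) ≤ 2^(n+1) := by linarith
  have claim : ∀ m : ℕ, ∀ x, u - m*δ < x → x < v + m*δ → |f x| ≤ (2^(n+1):ℝ)^m * C0' := by
    intro m
    induction m with
    | zero =>
      intro x h1 h2
      simp only [Nat.cast_zero, zero_mul, sub_zero, add_zero] at h1 h2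
      simpa using le_trans (hb x h1 h2) hC0C
    | succ m ihm =>
      intro x hx1 hx2
      have hmδ : (0:ℝ) ≤ (m:ℝ)*δ := by positivity
      have hvu' : v - u ≤ (v + m*δ) - (u - m*δ) := by linarith
      have hQm0 : (0:ℝ) ≤ (2^(n+1):ℝ)^m * C0' := by positivity
      have hmono : (2^(n+1):ℝ)^m * C0' ≤ (2^(n+1):ℝ)^(m+1) * C0' :=
        mul_le_mul_of_nonneg_right (pow_le_pow_right₀ hQ1 (by omega)) hC00
      by_cases hin : u - m*δ < x ∧ x < v + m*δ
      · exact le_trans (ihm x hin.1 hin.2) hmono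
      have hkey : ∃ y : ℝ, ∀ t : ℝ, 1 ≤ t → t ≤ (n:ℝ)+1 →
          u - m*δ < x - t*y ∧ x - t*y < v + m*δ := by
        push_cast at hx1 hx2
        rw [not_and_or, not_lt, not_lt] at hin
        rcases hin with hle | hge
        · -- x ≤ u - m*δ : use negative step
          have hs0 : 0 ≤ (u - m*δ) - x := by linarith
          have hsδ : (u - m*δ) - x < δ := by linarith
          refine ⟨-(((u - m*δ) - x)+γ), fun t ht1 ht2 => ?_⟩
          have hsγ : 0 < ((u - m*δ) - x) + γ := by linarith
          have e1 : t*(((u - m*δ) - x)+γ) ≤ ((n:ℝ)+1)*(((u - m*δ) - x)+γ) :=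
            mul_le_mul_of_nonneg_right ht2 (le_of_lt hsγ)
          have e0 : 1*(((u - m*δ) - x)+γ) ≤ t*(((u - m*δ) - x)+γ) :=
            mul_le_mul_of_nonneg_right ht1 (le_of_lt hsγ)
          have e2 : (n:ℝ)*((u - m*δ) - x) ≤ (n:ℝ)*δ :=
            mul_le_mul_of_nonneg_left (le_of_lt hsδ) (Nat.cast_nonneg n)
          constructor
          · have harg : x - t*(-(((u - m*δ) - x)+γ)) = x + t*(((u - m*δ) - x)+γ) := by ring
            rw [harg]
            linarith
          · have harg : x - t*(-(((u - m*δ) - x)+γ)) = x + t*(((u - m*δ) - x)+γ) := by ring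
            rw [harg]
            linarith
        · -- v + m*δ ≤ x : use positive step
          have hs0 : 0 ≤ x - (v + m*δ) := by linarith
          have hsδ : x - (v + m*δ) < δ := by linarith
          refine ⟨(x - (v + m*δ))+γ, fun t ht1 ht2 => ?_⟩
          have hsγ : 0 < (x - (v + m*δ)) + γ := by linarith
          have e1 : t*((x - (v + m*δ))+γ) ≤ ((n:ℝ)+1)*((x - (v + m*δ))+γ) :=
            mul_le_mul_of_nonneg_right ht2 (le_of_lt hsγ)
          have e0 : 1*((x - (v + m*δ))+γ) ≤ t*((x - (v + m*δ))+γ) :=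
            mul_le_mul_of_nonneg_right ht1 (le_of_lt hsγ)
          have e2 : (n:ℝ)*(x - (v + m*δ)) ≤ (n:ℝ)*δ :=
            mul_le_mul_of_nonneg_left (le_of_lt hsδ) (Nat.cast_nonneg n)
          exact ⟨by linarith, by linarith⟩
      obtain ⟨y, hy⟩ := hkey
      have hst := solveTop n f hp (x - ((n:ℝ)+1)*y) y
      rw [show x - ((n:ℝ)+1)*y + ((n:ℝ)+1)*y = x by ring] at hst
      have hterm : ∀ k ∈ Finset.range (n+1),
          ((n+1).choose k : ℝ) * |f (x - ((n:ℝ)+1)*y + k*y)|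
            ≤ ((n+1).choose k : ℝ) * ((2^(n+1):ℝ)^m * C0') := by
        intro k hk
        have hkn : k ≤ n := by
          simp only [Finset.mem_range] at hk; omega
        have harg : x - ((n:ℝ)+1)*y + k*y = x - (((n:ℝ)+1) - k)*y := by ring
        have ht1 : (1:ℝ) ≤ ((n:ℝ)+1) - k := by
          have : (k:ℝ) ≤ n := by exact_mod_cast hkn
          linarith
        have ht2 : ((n:ℝ)+1) - k ≤ (n:ℝ)+1 := by
          have : (0:ℝ) ≤ (k:ℝ) := by positivity
          linarith
        obtain ⟨hg1, hg2⟩ := hy (((n:ℝ)+1) - k) ht1 ht2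
        rw [harg]
        exact mul_le_mul_of_nonneg_left (ihm _ hg1 hg2) (by positivity)
      have hsum : ∑ k ∈ Finset.range (n+1), ((n+1).choose k : ℝ) * |f (x - ((n:ℝ)+1)*y + k*y)|
          ≤ 2^(n+1) * ((2^(n+1):ℝ)^m * C0') := by
        refine le_trans (Finset.sum_le_sum hterm) ?_
        rw [← Finset.sum_mul]
        exact mul_le_mul_of_nonneg_right (choose_sum_le n) hQm0
      calc |f x| ≤ 2^(n+1) * ((2^(n+1):ℝ)^m * C0') := le_trans hst hsum
        _ = (2^(n+1):ℝ)^(m+1) * C0' := by rw [pow_succ]; ring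
  intro R
  obtain ⟨m, hm⟩ := exists_nat_gt (max ((u + R)/δ) ((R - v)/δ))
  refine ⟨(2^(n+1):ℝ)^m * C0', fun x hx => ?_⟩
  have habs := abs_le.1 hx
  have h1 : (u + R)/δ < m := lt_of_le_of_lt (le_max_left _ _) hm
  have h2 : (R - v)/δ < m := lt_of_le_of_lt (le_max_right _ _) hm
  rw [div_lt_iff₀ hδpos] at h1 h2
  exact claim m x (by linarith) (by linarith)

lemma ofFn_snoc' {n : ℕ} (y : Fin n → ℝ) (h : ℝ) :
    List.ofFn (Fin.snoc y h : Fin (n+1) → ℝ) = (List.ofFn y) ++ [h] := by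
  rw [List.ofFn_succ']
  simp [Fin.snoc_castSucc, Fin.snoc_last]

theorem keyC : ∀ (n : ℕ) (f : ℝ → ℝ),
    (∀ (y : Fin (n+1) → ℝ) (x : ℝ), ((List.ofFn y).foldr Δ f) x = 0) →
    (∀ R : ℝ, ∃ C, ∀ x : ℝ, |x| ≤ R → |f x| ≤ C) →
    ∃ a : Fin (n+1) → ℝ, ∀ x, f x = ∑ i : Fin (n+1), a i * x ^ (i:ℕ) := by
  intro n
  induction n with
  | zero =>
    intro f hp _
    refine ⟨fun _ => f 0, fun x => ?_⟩
    have h1 := hp (fun _ => x) 0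
    simp only [List.ofFn_succ, List.ofFn_zero, List.foldr_cons, List.foldr_nil, Δ,
      zero_add] at h1
    have h2 : ∑ i : Fin (0+1), f 0 * x ^ (i:ℕ) = f 0 := by
      rw [Fin.sum_univ_one]
      simp
    rw [h2]
    linarith
  | succ n ih =>
    intro f hp hbdd
    -- each Δ h f satisfies the order-(n+1) equation
    have hΔp : ∀ h : ℝ, ∀ (y : Fin (n+1) → ℝ) (x : ℝ),
        ((List.ofFn y).foldr Δ (Δ h f)) x = 0 := by
      intro h y x
      have h1 := hp (Fin.snoc y h) x
      rwa [ofFn_snoc', List.foldr_append, List.foldr_cons, List.foldr_nil] at h1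
    -- boundedness of Δ h f
    have hΔb : ∀ h R : ℝ, ∃ C, ∀ x, |x| ≤ R → |Δ h f x| ≤ C := by
      intro h R
      obtain ⟨C, hC⟩ := hbdd (R + |h|)
      refine ⟨C + C, fun x hx => ?_⟩
      have h1 : |f (x + h)| ≤ C := hC (x+h)
        (le_trans (abs_add_le x h) (by linarith))
      have h2 : |f x| ≤ C := hC x (by linarith [abs_nonneg h])
      calc |Δ h f x| = |f (x+h) - f x| := rfl
        _ ≤ |f (x+h)| + |f x| := abs_sub _ _
        _ ≤ C + C := by linarith
    choose a ha using fun h : ℝ => ih (Δ h f) (hΔp h) (hΔb h)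
    -- cocycle identity for coefficients
    have hco : ∀ h k : ℝ, a (h+k) = shiftC (a h) k + a k := by
      intro h k
      apply poly_ext
      intro x
      have e : Δ (h+k) f x = Δ h f (x+k) + Δ k f x := by
        show f (x + (h+k)) - f x = (f (x+k+h) - f (x+k)) + (f (x+k) - f x)
        rw [show x + (h+k) = x+k+h by ring]
        ring
      calc ∑ i : Fin (n+1), a (h+k) i * x ^ (i:ℕ) = Δ (h+k) f x := (ha (h+k) x).symm
        _ = Δ h f (x+k) + Δ k f x := e
        _ = ∑ i : Fin (n+1), a h i * (x+k) ^ (i:ℕ) + ∑ i : Fin (n+1), a k i * x ^ (i:ℕ) := by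
            rw [ha, ha]
        _ = ∑ i : Fin (n+1), shiftC (a h) k i * x ^ (i:ℕ)
            + ∑ i : Fin (n+1), a k i * x ^ (i:ℕ) := by rw [shiftC_eval]
        _ = ∑ i : Fin (n+1), (shiftC (a h) k + a k) i * x ^ (i:ℕ) := by
            rw [← Finset.sum_add_distrib]
            exact Finset.sum_congr rfl (fun i _ => by simp [add_mul])
    have hadd : ∀ h k : ℝ, a (h+k) (Fin.last n) = a h (Fin.last n) + a k (Fin.last n) := by
      intro h k
      have h1 := congrFun (hco h k) (Fin.last n)
      rwa [Pi.add_apply, shiftC_last] at h1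
    -- boundedness of top coefficient
    obtain ⟨K, hK⟩ := coeff_bound n
    obtain ⟨C, hC⟩ := hbdd ((n:ℝ) + 2)
    have hφb : ∀ h : ℝ, |h| ≤ 1 → |a h (Fin.last n)| ≤ K * (C + C) := by
      intro h hh
      refine hK (a h) (Δ h f) (ha h) (C+C) (fun j => ?_) (Fin.last n)
      have hj : ((j:ℕ):ℝ) ≤ (n:ℝ) := by exact_mod_cast Nat.le_of_lt_succ j.isLt
      have h1 : |f (((j:ℕ):ℝ) + h)| ≤ C := by
        refine hC _ (le_trans (abs_add_le _ _) ?_)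
        rw [abs_of_nonneg (by positivity : (0:ℝ) ≤ ((j:ℕ):ℝ))]
        linarith
      have h2 : |f ((j:ℕ):ℝ)| ≤ C := by
        refine hC _ ?_
        rw [abs_of_nonneg (by positivity : (0:ℝ) ≤ ((j:ℕ):ℝ))]
        linarith [abs_nonneg h]
      calc |Δ h f ((j:ℕ):ℝ)| = |f (((j:ℕ):ℝ) + h) - f ((j:ℕ):ℝ)| := rfl
        _ ≤ |f (((j:ℕ):ℝ) + h)| + |f ((j:ℕ):ℝ)| := abs_sub _ _
        _ ≤ C + C := by linarith
    set c := a 1 (Fin.last n) with hc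
    have hlin : ∀ h : ℝ, a h (Fin.last n) = c * h :=
      additive_linear (fun h => a h (Fin.last n)) hadd (K * (C+C)) hφb
    -- subtract top monomial
    set g : ℝ → ℝ := fun x => f x - (c/((n:ℝ)+1)) * x^(n+1) with hg
    have hmono : ∀ x h : ℝ, (x+h)^(n+1) - x^(n+1)
        = ∑ i : Fin (n+1), ((n+1).choose (i:ℕ) : ℝ) * h^(n+1-(i:ℕ)) * x^(i:ℕ) := by
      intro x h
      rw [add_pow, Finset.sum_range_succ]
      simp only [Nat.choose_self, Nat.cast_one, Nat.sub_self, pow_zero, mul_one, one_mul]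
      rw [add_sub_cancel_right]
      rw [Fin.sum_univ_eq_sum_range (fun i => ((n+1).choose i : ℝ) * h^(n+1-i) * x^i)]
      exact Finset.sum_congr rfl (fun i _ => by ring)
    have hgd : ∀ h : ℝ, ∃ b : Fin n → ℝ, ∀ x, Δ h g x = ∑ i : Fin n, b i * x ^ (i:ℕ) := by
      intro h
      set cf : Fin (n+1) → ℝ := fun i =>
        a h i - (c/((n:ℝ)+1)) * (((n+1).choose (i:ℕ) : ℝ) * h^(n+1-(i:ℕ))) with hcf
      have e : ∀ x : ℝ, Δ h g x = ∑ i : Fin (n+1), cf i * x^(i:ℕ) := by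
        intro x
        have e0 : Δ h g x = Δ h f x - (c/((n:ℝ)+1)) * ((x+h)^(n+1) - x^(n+1)) := by
          simp only [hg, Δ]
          ring
        rw [e0, ha, hmono, Finset.mul_sum, ← Finset.sum_sub_distrib]
        exact Finset.sum_congr rfl (fun i _ => by rw [hcf]; ring)
      have hlast : cf (Fin.last n) = 0 := by
        rw [hcf]
        simp only [Fin.val_last, Nat.choose_succ_self_right]
        rw [hlin, show n+1-n = 1 by omega, pow_one]
        push_cast
        have hne : (n:ℝ) + 1 ≠ 0 := by positivity
        field_simp
        ring
      exact ⟨fun i => cf i.castSucc, fun x => by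
        rw [e x, sum_last_zero cf hlast]⟩
    have hgp : ∀ (y : Fin (n+1) → ℝ) (x : ℝ), ((List.ofFn y).foldr Δ g) x = 0 := by
      intro y x
      have hsplit : List.ofFn y
          = List.ofFn (fun i : Fin n => y i.castSucc) ++ [y (Fin.last n)] := by
        rw [List.ofFn_succ']
        simp
      rw [hsplit, List.foldr_append, List.foldr_cons, List.foldr_nil]
      obtain ⟨b, hb⟩ := hgd (y (Fin.last n))
      exact kill n _ b hb _ (by simp) x
    have hgb : ∀ R : ℝ, ∃ C', ∀ x, |x| ≤ R → |g x| ≤ C' := by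
      intro R
      obtain ⟨C1, hC1⟩ := hbdd R
      refine ⟨C1 + |c/((n:ℝ)+1)| * |R|^(n+1), fun x hx => ?_⟩
      have h1 : |x|^(n+1) ≤ |R|^(n+1) :=
        pow_le_pow_left₀ (abs_nonneg x) (hx.trans (le_abs_self R)) _
      have h2 : |g x| ≤ |f x| + |c/((n:ℝ)+1)| * |x|^(n+1) := by
        simp only [hg]
        refine le_trans (abs_sub _ _) ?_
        rw [abs_mul, abs_pow]
      have h3 := hC1 x hx
      have h4 : |c/((n:ℝ)+1)| * |x|^(n+1) ≤ |c/((n:ℝ)+1)| * |R|^(n+1) :=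
        mul_le_mul_of_nonneg_left h1 (abs_nonneg _)
      linarith
    obtain ⟨d, hd⟩ := ih g hgp hgb
    refine ⟨Fin.snoc d (c/((n:ℝ)+1)), fun x => ?_⟩
    rw [Fin.sum_univ_castSucc]
    simp only [Fin.snoc_castSucc, Fin.snoc_last, Fin.val_last, Fin.coe_castSucc]
    have h5 := hd x
    simp only [hg] at h5
    linarith

lemma boundInterval (n : ℕ) (f : ℝ → ℝ)
    (hp : ∀ (y : Fin (n+1) → ℝ) (x : ℝ), ((List.ofFn y).foldr Δ f) x = 0)
    (s : Set ℝ) (hs : MeasurableSet s) (hpos : 0 < volume s) (C : ℝ)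
    (hC : ∀ x ∈ s, |f x| ≤ C) :
    ∃ u v C0 : ℝ, u < v ∧ ∀ x, u < x → x < v → |f x| ≤ C0 := by
  -- Lebesgue density point
  have hne : volume.restrict s ≠ 0 := by
    rw [Ne, Measure.restrict_eq_zero]
    exact ne_of_gt hpos
  haveI := ae_neBot.2 hne
  obtain ⟨d, hd⟩ := (Besicovitch.ae_tendsto_measure_inter_div volume s).exists
  set εn : ℝ := 1/(8*((n:ℝ)+1)^2) with hεn
  have hn1 : (0:ℝ) < (n:ℝ)+1 := by positivity
  have hεpos : 0 < εn := by rw [hεn]; positivity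
  have hεle : εn ≤ 1 := by
    rw [hεn, div_le_one (by positivity)]
    nlinarith [sq_nonneg ((n:ℝ)+1)]
  have hlt1 : (1:ℝ≥0∞) - ENNReal.ofReal εn < 1 :=
    ENNReal.sub_lt_self (by norm_num) (by norm_num)
      (by simpa using ENNReal.ofReal_pos.2 hεpos |>.ne')
  have hev := hd.eventually (eventually_gt_nhds hlt1)
  obtain ⟨r, hratio, hr⟩ := (hev.and self_mem_nhdsWithin).exists
  -- small complement in the ball
  have hBvol : volume (Metric.closedBall d r) = ENNReal.ofReal (2*r) :=
    Real.volume_closedBall d r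
  have hB0 : volume (Metric.closedBall d r) ≠ 0 := by
    rw [hBvol]
    simp only [ne_eq, ENNReal.ofReal_eq_zero, not_le]
    linarith
  have hBt : volume (Metric.closedBall d r) ≠ ⊤ := by
    rw [hBvol]; exact ENNReal.ofReal_ne_top
  have hinter : (1 - ENNReal.ofReal εn) * volume (Metric.closedBall d r)
      ≤ volume (s ∩ Metric.closedBall d r) := by
    have := (ENNReal.lt_div_iff_mul_lt (Or.inl hB0) (Or.inl hBt)).1 hratio
    exact le_of_lt this
  have hdiff : volume (Metric.closedBall d r \ s) ≤ ENNReal.ofReal εn * volume (Metric.closedBall d r) := by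
    have hsplit := measure_inter_add_diff (μ := volume) (Metric.closedBall d r) hs
    have hXfin : volume (Metric.closedBall d r ∩ s) ≠ ⊤ :=
      ne_top_of_le_ne_top hBt (measure_mono Set.inter_subset_left)
    have hY : volume (Metric.closedBall d r \ s)
        = volume (Metric.closedBall d r) - volume (Metric.closedBall d r ∩ s) := by
      rw [← hsplit]
      rw [ENNReal.add_sub_cancel_left hXfin]
    rw [hY]
    have hint' : (1 - ENNReal.ofReal εn) * volume (Metric.closedBall d r)
        ≤ volume (Metric.closedBall d r ∩ s) := by
      rwa [Set.inter_comm]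
    refine le_trans (tsub_le_tsub_left hint' _) ?_
    have hdecomp : (1 - ENNReal.ofReal εn) * volume (Metric.closedBall d r)
        + ENNReal.ofReal εn * volume (Metric.closedBall d r)
        = volume (Metric.closedBall d r) := by
      rw [← add_mul, tsub_add_cancel_of_le (by
        simpa using ENNReal.ofReal_le_one.2 hεle), one_mul]
    rw [tsub_le_iff_right, add_comm]
    exact le_of_eq hdecomp.symm
  set ρ : ℝ := r/(2*((n:ℝ)+1)) with hρ
  have hρpos : 0 < ρ := by rw [hρ]; positivity
  refine ⟨d - r/2, d + r/2, 2^(n+1) * max C 0, by linarith, fun t ht1 ht2 => ?_⟩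
  -- bad sets
  set Bad : ℕ → Set ℝ := fun j => {y | y ∈ Set.Ioo 0 ρ ∧ t - (j:ℝ)*y ∉ s} with hBad
  have hBadvol : ∀ j : ℕ, 1 ≤ j → j ≤ n+1 →
      volume (Bad j) ≤ ENNReal.ofReal εn * ENNReal.ofReal (2*r) := by
    intro j hj1 hj2
    have hjR : (1:ℝ) ≤ (j:ℝ) := by exact_mod_cast hj1
    have hjR2 : (j:ℝ) ≤ (n:ℝ)+1 := by exact_mod_cast hj2
    have hsub : Bad j ⊆ (fun y => (-(j:ℝ)) * y) ⁻¹' ((fun z => t + z) ⁻¹' (Metric.closedBall d r \ s)) := by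
      intro y hy
      obtain ⟨⟨hy0, hyρ⟩, hys⟩ := hy
      simp only [Set.mem_preimage, Set.mem_diff]
      have harg : t + -(j:ℝ) * y = t - (j:ℝ)*y := by ring
      rw [harg]
      refine ⟨?_, hys⟩
      rw [Metric.mem_closedBall, Real.dist_eq, abs_le]
      have hjy0 : 0 < (j:ℝ)*y := by positivity
      have hjyr : (j:ℝ)*y ≤ r/2 := by
        have h1 : (j:ℝ)*y ≤ ((n:ℝ)+1)*y := by nlinarith
        have h2 : ((n:ℝ)+1)*y ≤ ((n:ℝ)+1)*ρ := by nlinarith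
        have h3 : ((n:ℝ)+1)*ρ = r/2 := by rw [hρ]; field_simp
        linarith
      constructor <;> linarith
    refine le_trans (measure_mono hsub) ?_
    rw [Real.volume_preimage_mul_left (by simp; linarith : (-(j:ℝ)) ≠ 0)]
    rw [measure_preimage_add]
    have h1 : ENNReal.ofReal |(-(j:ℝ))⁻¹| ≤ 1 := by
      rw [abs_inv, abs_neg]
      refine ENNReal.ofReal_le_one.2 ?_
      rw [abs_of_pos (by linarith)]
      rw [inv_le_one_iff₀]
      right; linarith
    calc ENNReal.ofReal |(-(j:ℝ))⁻¹| * volume (Metric.closedBall d r \ s)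
        ≤ 1 * volume (Metric.closedBall d r \ s) := mul_le_mul_left h1 _
      _ = volume (Metric.closedBall d r \ s) := one_mul _
      _ ≤ ENNReal.ofReal εn * volume (Metric.closedBall d r) := hdiff
      _ = ENNReal.ofReal εn * ENNReal.ofReal (2*r) := by rw [hBvol]
  -- union of bad sets is small
  have hUnion : volume (⋃ j ∈ Finset.Icc 1 (n+1), Bad j) < volume (Set.Ioo (0:ℝ) ρ) := by
    refine lt_of_le_of_lt (measure_biUnion_finset_le _ _) ?_
    have hcard : (Finset.Icc 1 (n+1)).card = n+1 := by
      rw [Nat.card_Icc]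
      omega
    have hsum : ∑ j ∈ Finset.Icc 1 (n+1), volume (Bad j)
        ≤ (n+1) * (ENNReal.ofReal εn * ENNReal.ofReal (2*r)) := by
      calc ∑ j ∈ Finset.Icc 1 (n+1), volume (Bad j)
          ≤ ∑ j ∈ Finset.Icc 1 (n+1), ENNReal.ofReal εn * ENNReal.ofReal (2*r) := by
            refine Finset.sum_le_sum (fun j hj => ?_)
            simp only [Finset.mem_Icc] at hj
            exact hBadvol j hj.1 hj.2
        _ = (n+1) * (ENNReal.ofReal εn * ENNReal.ofReal (2*r)) := by
            rw [Finset.sum_const, hcard, nsmul_eq_mul]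
            push_cast
            ring
    refine lt_of_le_of_lt hsum ?_
    rw [Real.volume_Ioo, sub_zero]
    rw [← ENNReal.ofReal_mul (le_of_lt hεpos)]
    have hcast : ((n:ℝ≥0∞)+1) = ENNReal.ofReal ((n:ℝ)+1) := by
      rw [ENNReal.ofReal_add (by positivity) (by norm_num), ENNReal.ofReal_natCast,
        ENNReal.ofReal_one]
    rw [hcast, ← ENNReal.ofReal_mul (by positivity)]
    refine ENNReal.ofReal_lt_ofReal_iff_of_nonneg (by positivity) |>.2 ?_
    push_cast
    rw [hεn, hρ]
    have heq : ((n:ℝ)+1) * (1/(8*((n:ℝ)+1)^2) * (2*r)) = r/(4*((n:ℝ)+1)) := by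
      field_simp
      ring
    rw [heq, div_lt_div_iff₀ (by positivity) (by positivity)]
    nlinarith [sq_nonneg ((n:ℝ)+1), hr]
  -- pick a good y
  have hnotsub : ¬ (Set.Ioo (0:ℝ) ρ ⊆ ⋃ j ∈ Finset.Icc 1 (n+1), Bad j) := by
    intro hsub
    exact absurd (measure_mono hsub) (not_le.2 hUnion)
  obtain ⟨y, hyIoo, hyU⟩ := Set.not_subset.1 hnotsub
  have hgood : ∀ j : ℕ, 1 ≤ j → j ≤ n+1 → t - (j:ℝ)*y ∈ s := by
    intro j hj1 hj2
    by_contra hbad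
    exact hyU (Set.mem_biUnion (Finset.mem_Icc.2 (by omega))
      (⟨hyIoo, hbad⟩ : y ∈ Bad j))
  -- conclude
  have hC0 : 0 ≤ C := le_trans (abs_nonneg _) (hC _ (hgood 1 le_rfl (by omega)))
  have hst := solveTop n f hp (t - ((n:ℝ)+1)*y) y
  rw [show t - ((n:ℝ)+1)*y + ((n:ℝ)+1)*y = t by ring] at hst
  have hterm : ∀ k ∈ Finset.range (n+1),
      ((n+1).choose k : ℝ) * |f (t - ((n:ℝ)+1)*y + k*y)| ≤ ((n+1).choose k : ℝ) * C := by
    intro k hk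
    simp only [Finset.mem_range] at hk
    have harg : t - ((n:ℝ)+1)*y + k*y = t - ((n+1-k : ℕ):ℝ)*y := by
      push_cast [Nat.cast_sub (by omega : k ≤ n+1)]
      ring
    rw [harg]
    exact mul_le_mul_of_nonneg_left (hC _ (hgood (n+1-k) (by omega) (by omega))) (by positivity)
  calc |f t| ≤ ∑ k ∈ Finset.range (n+1), ((n+1).choose k : ℝ) * |f (t - ((n:ℝ)+1)*y + k*y)| := hst
    _ ≤ ∑ k ∈ Finset.range (n+1), ((n+1).choose k : ℝ) * C := Finset.sum_le_sum hterm
    _ = (∑ k ∈ Finset.range (n+1), ((n+1).choose k : ℝ)) * C := by rw [Finset.sum_mul]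
    _ ≤ 2^(n+1) * C := mul_le_mul_of_nonneg_right (choose_sum_le n) hC0
    _ ≤ 2^(n+1) * max C 0 := by
        refine mul_le_mul_of_nonneg_left (le_max_left _ _) (by positivity)

theorem stmt_8 (n : ℕ) (p : ℝ → ℝ)
    (hpoly : ∀ (y : Fin (n + 1) → ℝ) (x : ℝ), ((List.ofFn y).foldr Δ p) x = 0)
    (hreg : ∃ s : Set ℝ, MeasurableSet s ∧ 0 < volume s ∧
      ∃ C : ℝ, ∀ x ∈ s, |p x| ≤ C) :
    ∃ a : Fin (n + 1) → ℝ, ∀ x : ℝ, p x = ∑ i : Fin (n + 1), a i * x ^ (i : ℕ) := by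
  obtain ⟨s, hs, hpos, C, hC⟩ := hreg
  obtain ⟨u, v, C0, huv, hb⟩ := boundInterval n p hpoly s hs hpos C hC
  exact keyC n p hpoly (boundAll n p hpoly u v C0 huv hb)
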